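/- Let (M_t)_{t≥0} be a positive continuous local martingale whose paths a.s. never become eventually constant (P(M_t = M_∞ for all t ≥ s) = 0 for every s ≥ 0). Then there exists an increasing sequence (a_k)_{k∈ℕ} of nonnegative reals tending to infinity such that for every k, P(M_{a_k} ≥ M_{a_{k+1}} ≥ M_{a_{k+2}} ≥ ⋯) = 0. -/

import Mathlib

open MeasureTheory Filter Set
open scoped ENNReal

/-- From nonincreasing along rationals in `[s,t]` plus continuity, nonincreasing on reals. -/
lemma cont_rat_mono {f : ℝ → ℝ} (hf : Continuous f) {s t : ℝ}
    (h : ∀ p q : ℚ, s ≤ p → (p:ℝ) ≤ q → (q:ℝ) ≤ t → f q ≤ f p) :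
    ∀ x y, s ≤ x → x ≤ y → y ≤ t → f y ≤ f x := by
  intro x y hsx hxy hyt
  by_contra hc
  push_neg at hc
  set c := f y - f x with hcdef
  have hcpos : 0 < c := by rw [hcdef]; linarith
  rcases hxy.eq_or_lt with rfl | hxy
  · exact absurd hc (lt_irrefl _)
  obtain ⟨δ₁, hδ₁, h1⟩ := Metric.continuous_iff.mp hf x (c/2) (by linarith)
  obtain ⟨δ₂, hδ₂, h2⟩ := Metric.continuous_iff.mp hf y (c/2) (by linarith)
  obtain ⟨p, hp1, hp2⟩ := exists_rat_btwn (show x < min (x + δ₁) y by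
    simp [lt_min_iff]; exact ⟨by linarith, hxy⟩)
  obtain ⟨q, hq1, hq2⟩ := exists_rat_btwn (show max (y - δ₂) p < y by
    simp [max_lt_iff]; exact ⟨by linarith, lt_of_lt_of_le hp2 (min_le_right _ _)⟩)
  have hpq : (p:ℝ) ≤ q := le_of_lt (lt_of_le_of_lt (le_max_right _ _) hq1)
  have hfp : dist (f p) (f x) < c/2 := h1 _ (by
    rw [Real.dist_eq, abs_sub_lt_iff]
    constructor <;> [skip; skip] <;>
      [linarith [lt_of_lt_of_le hp2 (min_le_left _ _)]; linarith])
  have hfq : dist (f q) (f y) < c/2 := h2 _ (by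
    rw [Real.dist_eq, abs_sub_lt_iff]
    refine ⟨by linarith, ?_⟩
    have := lt_of_le_of_lt (le_max_left (y - δ₂) (p:ℝ)) hq1
    linarith)
  have hle : f q ≤ f p := h p q (le_of_lt (lt_of_le_of_lt hsx hp1)) hpq
    (by linarith [hq2, hyt])
  rw [Real.dist_eq, abs_sub_lt_iff] at hfp hfq
  have : f x + c ≤ f x + c := le_refl _
  linarith [hfp.1, hfp.2, hfq.1, hfq.2]

/-- From equal to `f s` on rationals `≥ s` plus continuity, constant on `[s,∞)`. -/
lemma cont_rat_const {f : ℝ → ℝ} (hf : Continuous f) {s : ℝ}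
    (h : ∀ q : ℚ, s ≤ q → f q = f s) :
    ∀ t, s ≤ t → f t = f s := by
  intro t hst
  rcases hst.eq_or_lt with rfl | hst
  · rfl
  by_contra hc
  set c := |f t - f s| with hcdef
  have hcpos : 0 < c := abs_pos.mpr (sub_ne_zero.mpr hc)
  obtain ⟨δ, hδ, h1⟩ := Metric.continuous_iff.mp hf t c hcpos
  obtain ⟨q, hq1, hq2⟩ := exists_rat_btwn (show max s (t - δ) < t by
    simp [max_lt_iff]; exact ⟨hst, by linarith⟩)
  have hq3 : s ≤ (q:ℝ) := le_of_lt (lt_of_le_of_lt (le_max_left _ _) hq1)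
  have := h1 (q:ℝ) (by
    rw [Real.dist_eq, abs_sub_lt_iff]
    have := lt_of_le_of_lt (le_max_right s (t - δ)) hq1
    constructor <;> linarith)
  rw [h q (by exact_mod_cast hq3)] at this
  rw [Real.dist_eq] at this
  have : |f t - f s| < c := by rw [abs_sub_comm] at this; exact this
  exact absurd this (by rw [hcdef]; exact lt_irrefl _)

noncomputable def dygrid (s t : ℝ) (m i : ℕ) : ℝ := s + i * (t - s) / 2 ^ m

lemma dygrid_zero (s t : ℝ) (m : ℕ) : dygrid s t m 0 = s := by simp [dygrid]

lemma dygrid_last (s t : ℝ) (m : ℕ) : dygrid s t m (2 ^ m) = t := by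
  have h2 : (2:ℝ) ^ m ≠ 0 := by positivity
  unfold dygrid
  push_cast
  field_simp
  ring

lemma dygrid_mono {s t : ℝ} (hst : s ≤ t) (m : ℕ) {i i' : ℕ} (h : i ≤ i') :
    dygrid s t m i ≤ dygrid s t m i' := by
  have hii : (i:ℝ) ≤ (i':ℝ) := by exact_mod_cast h
  have h2 : (0:ℝ) < 2 ^ m := by positivity
  have key : 0 ≤ ((i':ℝ) - i) * (t - s) / 2 ^ m :=
    div_nonneg (mul_nonneg (by linarith) (by linarith)) h2.le
  unfold dygrid
  have : ((i':ℝ) - i) * (t - s) / 2 ^ m = (i':ℝ) * (t-s) / 2^m - (i:ℝ)*(t-s)/2^m := by ring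
  rw [this] at key
  linarith

lemma dygrid_mem {s t : ℝ} (hst : s ≤ t) (m : ℕ) {i : ℕ} (h : i ≤ 2 ^ m) :
    s ≤ dygrid s t m i ∧ dygrid s t m i ≤ t := by
  constructor
  · have := dygrid_mono hst m (Nat.zero_le i)
    rwa [dygrid_zero] at this
  · have := dygrid_mono hst m h
    rwa [dygrid_last] at this

lemma dygrid_exists_between {s t v w : ℝ} (hst : s < t) (m : ℕ)
    (hsv : s ≤ v) (hvt : v ≤ t) (hstep : (t - s) / 2 ^ m < w - v) :
    ∃ i ≤ 2 ^ m, v ≤ dygrid s t m i ∧ dygrid s t m i < w := by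
  have h2 : (0:ℝ) < 2 ^ m := by positivity
  have hts : (0:ℝ) < t - s := by linarith
  set r : ℝ := (v - s) * 2 ^ m / (t - s) with hr
  have hr0 : 0 ≤ r := div_nonneg (mul_nonneg (by linarith) (by positivity)) hts.le
  refine ⟨Nat.ceil r, ?_, ?_, ?_⟩
  · rw [Nat.ceil_le]
    push_cast
    rw [hr, div_le_iff₀ hts]
    nlinarith
  · unfold dygrid
    have h1 : r ≤ (Nat.ceil r : ℝ) := Nat.le_ceil r
    rw [hr, div_le_iff₀ hts] at h1
    have : v - s ≤ (Nat.ceil r : ℝ) * (t - s) / 2 ^ m := by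
      rw [le_div_iff₀ h2]; nlinarith
    linarith
  · unfold dygrid
    have h1 : (Nat.ceil r : ℝ) < r + 1 := Nat.ceil_lt_add_one hr0
    have hmul : (Nat.ceil r : ℝ) * (t - s) / 2 ^ m < (r + 1) * (t - s) / 2 ^ m := by
      gcongr
    have h3 : (r + 1) * (t - s) / 2 ^ m = (v - s) + (t - s) / 2 ^ m := by
      rw [hr]; field_simp
    rw [h3] at hmul
    linarith

lemma exists_small_step {e c : ℝ} (he : 0 < e) : ∃ m : ℕ, c / 2 ^ m < e := by
  obtain ⟨m, hm⟩ := pow_unbounded_of_one_lt (c / e) (by norm_num : (1:ℝ) < 2)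
  refine ⟨m, ?_⟩
  have h2 : (0:ℝ) < 2 ^ m := by positivity
  rw [div_lt_iff₀ h2]
  rw [div_lt_iff₀ he] at hm
  nlinarith

/-- Nonincreasing along all dyadic grids plus continuity implies nonincreasing. -/
lemma cont_dyadic_mono {f : ℝ → ℝ} (hf : Continuous f) {s t : ℝ} (hst : s < t)
    (h : ∀ m i : ℕ, i < 2 ^ m → f (dygrid s t m (i + 1)) ≤ f (dygrid s t m i)) :
    ∀ x y, s ≤ x → x ≤ y → y ≤ t → f y ≤ f x := by
  have hchain : ∀ m i i' : ℕ, i ≤ i' → i' ≤ 2 ^ m →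
      f (dygrid s t m i') ≤ f (dygrid s t m i) := by
    intro m i i' hii' hi'
    induction i' with
    | zero => interval_cases i; exact le_refl _
    | succ n ih =>
      rcases Nat.lt_succ_iff_lt_or_eq.mp (Nat.lt_succ_of_le hii') with hlt | rfl
      · exact le_trans (h m n (by omega)) (ih (by omega) (by omega))
      · exact le_refl _
  intro x y hsx hxy hyt
  by_contra hcon
  push_neg at hcon
  set c := f y - f x with hcdef
  have hcpos : 0 < c := by rw [hcdef]; linarith
  rcases hxy.eq_or_lt with rfl | hxy
  · exact absurd hcon (lt_irrefl _)
  obtain ⟨δ₁, hδ₁, h1⟩ := Metric.continuous_iff.mp hf x (c/2) (by linarith)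
  obtain ⟨δ₂, hδ₂, h2⟩ := Metric.continuous_iff.mp hf y (c/2) (by linarith)
  set e := min (min δ₁ (δ₂/2)) ((y - x)/2) with he
  have hepos : 0 < e := by
    apply lt_min (lt_min hδ₁ (by linarith)); linarith
  obtain ⟨m, hm⟩ := exists_small_step (c := t - s) hepos
  set mid := (x + y)/2 with hmid
  have hb1 : e ≤ min (x + δ₁) mid - x := by
    rcases min_cases (x + δ₁) mid with ⟨hc1, _⟩ | ⟨hc1, _⟩ <;> rw [hc1]
    · have : e ≤ δ₁ := le_trans (min_le_left _ _) (min_le_left _ _); linarith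
    · have : e ≤ (y - x)/2 := min_le_right _ _
      rw [hmid]; linarith
  have hb2 : e ≤ y - max mid (y - δ₂/2) := by
    rcases max_cases mid (y - δ₂/2) with ⟨hc1, _⟩ | ⟨hc1, _⟩ <;> rw [hc1]
    · have : e ≤ (y - x)/2 := min_le_right _ _
      rw [hmid]; linarith
    · have : e ≤ δ₂/2 := le_trans (min_le_left _ _) (min_le_right _ _); linarith
  obtain ⟨i, hi, hxi, hiw⟩ := dygrid_exists_between hst m hsx (le_trans hxy.le hyt)
    (lt_of_lt_of_le hm hb1)
  obtain ⟨i', hi', hyi', hi'w⟩ := dygrid_exists_between hst m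
    (show s ≤ max mid (y - δ₂/2) from le_trans hsx
      (le_trans (by rw [hmid]; linarith) (le_max_left _ _)))
    (show max mid (y - δ₂/2) ≤ t by
      rcases max_cases mid (y - δ₂/2) with ⟨hc1, _⟩ | ⟨hc1, _⟩ <;> rw [hc1] <;>
        [rw [hmid]; skip] <;> linarith)
    (lt_of_lt_of_le hm hb2)
  have hii' : i ≤ i' := by
    by_contra hcc
    push_neg at hcc
    have hmono := dygrid_mono (le_of_lt hst) m (le_of_lt hcc)
    have hd1 : dygrid s t m i < mid := lt_of_lt_of_le hiw (min_le_right _ _)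
    have hd2 : mid ≤ dygrid s t m i' := le_trans (le_max_left _ _) hyi'
    linarith
  have hle := hchain m i i' hii' hi'
  have hfp := h1 (dygrid s t m i) (by
    rw [Real.dist_eq, abs_sub_lt_iff]
    have := lt_of_lt_of_le hiw (min_le_left _ _)
    constructor <;> linarith)
  have hfq := h2 (dygrid s t m i') (by
    rw [Real.dist_eq, abs_sub_lt_iff]
    have := le_trans (le_max_right mid (y - δ₂/2)) hyi'
    constructor <;> linarith)
  rw [Real.dist_eq, abs_sub_lt_iff] at hfp hfq
  linarith [hfp.1, hfp.2, hfq.1, hfq.2]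


section rigid

variable {Ω : Type*} (X : ℝ → Ω → ℝ) (s t ε : ℝ)

/-- The set of paths having an `ε`-rise between rational times in `[s, v]`. -/
def rSet (v : ℝ) : Set Ω :=
  {ω | ∃ p q : ℚ, s ≤ (p:ℝ) ∧ (p:ℝ) ≤ q ∧ (q:ℝ) ≤ v ∧ X p ω + ε ≤ X q ω}

lemma rSet_mono {v v' : ℝ} (h : v ≤ v') : rSet X s ε v ⊆ rSet X s ε v' := by
  rintro ω ⟨p, q, h1, h2, h3, h4⟩
  exact ⟨p, q, h1, h2, le_trans h3 h, h4⟩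

/-- The first grid index (at dyadic level `m`) at which an `ε`-rise has occurred. -/
noncomputable def gidx (m : ℕ) (ω : Ω) : ℕ :=
  sInf {i | 2 ^ m ≤ i ∨ ω ∈ rSet X s ε (dygrid s t m i)}

/-- Discretized (grid-valued) approximation of the first rise time. -/
noncomputable def rhoM (m : ℕ) (ω : Ω) : ℝ := dygrid s t m (gidx X s t ε m ω)

/-- The first time in `[s,t]` at which an `ε`-rise has occurred (or `t`). -/
noncomputable def rhoStar (ω : Ω) : ℝ :=
  sInf ({v | s ≤ v ∧ v ≤ t ∧ ω ∈ rSet X s ε v} ∪ {t})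

variable {X s t ε}

lemma gidx_le (m : ℕ) (ω : Ω) : gidx X s t ε m ω ≤ 2 ^ m :=
  Nat.sInf_le (Or.inl le_rfl)

lemma gidx_spec (m : ℕ) (ω : Ω) :
    2 ^ m ≤ gidx X s t ε m ω ∨ ω ∈ rSet X s ε (rhoM X s t ε m ω) :=
  Nat.sInf_mem (⟨2 ^ m, Or.inl le_rfl⟩ :
    Set.Nonempty {i | 2 ^ m ≤ i ∨ ω ∈ rSet X s ε (dygrid s t m i)})

lemma gidx_min (m : ℕ) (ω : Ω) {j : ℕ} (hj : j < gidx X s t ε m ω) :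
    ¬(2 ^ m ≤ j ∨ ω ∈ rSet X s ε (dygrid s t m j)) :=
  Nat.notMem_of_lt_sInf hj

lemma rhoStar_bddBelow (hst : s ≤ t) (ω : Ω) :
    BddBelow ({v | s ≤ v ∧ v ≤ t ∧ ω ∈ rSet X s ε v} ∪ {t}) := by
  refine ⟨s, ?_⟩
  rintro v (⟨h1, _, _⟩ | rfl)
  · exact h1
  · exact hst

lemma rhoStar_le_t (hst : s ≤ t) (ω : Ω) : rhoStar X s t ε ω ≤ t :=
  csInf_le (rhoStar_bddBelow hst ω) (Or.inr rfl)

lemma s_le_rhoStar (hst : s ≤ t) (ω : Ω) : s ≤ rhoStar X s t ε ω := by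
  apply le_csInf ⟨t, Or.inr rfl⟩
  rintro v (⟨h1, _, _⟩ | rfl)
  · exact h1
  · exact hst

lemma rhoM_mem (hst : s ≤ t) (m : ℕ) (ω : Ω) :
    s ≤ rhoM X s t ε m ω ∧ rhoM X s t ε m ω ≤ t :=
  dygrid_mem hst m (gidx_le m ω)

lemma rhoStar_le_rhoM (hst : s ≤ t) (m : ℕ) (ω : Ω) :
    rhoStar X s t ε ω ≤ rhoM X s t ε m ω := by
  apply csInf_le (rhoStar_bddBelow hst ω)
  rcases gidx_spec (X := X) (s := s) (t := t) (ε := ε) m ω with h | h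
  · have : gidx X s t ε m ω = 2 ^ m := le_antisymm (gidx_le m ω) h
    right
    simp only [rhoM, this, dygrid_last, Set.mem_singleton_iff]
  · exact Or.inl ⟨(rhoM_mem hst m ω).1, (rhoM_mem hst m ω).2, h⟩

lemma tendsto_rhoM (hst : s < t) (ω : Ω) :
    Tendsto (fun m => rhoM X s t ε m ω) atTop (nhds (rhoStar X s t ε ω)) := by
  rw [tendsto_order]
  constructor
  · intro w hw
    exact Eventually.of_forall fun m => lt_of_lt_of_le hw (rhoStar_le_rhoM hst.le m ω)
  · intro w hw
    have hne : ({v | s ≤ v ∧ v ≤ t ∧ ω ∈ rSet X s ε v} ∪ {t}).Nonempty := ⟨t, Or.inr rfl⟩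
    obtain ⟨v, hv, hvw⟩ := exists_lt_of_csInf_lt hne hw
    rcases hv with ⟨hsv, hvt, hrise⟩ | rfl
    · obtain ⟨m₀, hm₀⟩ := exists_small_step (c := t - s) (show 0 < w - v by linarith)
      rw [eventually_atTop]
      refine ⟨m₀, fun m hm => ?_⟩
      have hstep : (t - s) / 2 ^ m < w - v := by
        refine lt_of_le_of_lt ?_ hm₀
        apply div_le_div_of_nonneg_left (by linarith) (by positivity)
        exact pow_le_pow_right₀ (by norm_num) hm
      obtain ⟨i, hi, hvi, hiw⟩ := dygrid_exists_between hst m hsv hvt hstep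
      have hmem : ω ∈ rSet X s ε (dygrid s t m i) := rSet_mono X s ε hvi hrise
      have hgle : gidx X s t ε m ω ≤ i := Nat.sInf_le (Or.inr hmem)
      exact lt_of_le_of_lt (dygrid_mono hst.le m hgle) hiw
    · rw [eventually_atTop]
      exact ⟨0, fun m _ => lt_of_le_of_lt (rhoM_mem hst.le m ω).2 hvw⟩

/-- Before the first rise time, the path stays below `X s + ε`. -/
lemma rhoStar_bound (hst : s < t) (hε : 0 < ε) (ω : Ω)
    (hcont : Continuous fun v => X v ω) :
    X (rhoStar X s t ε ω) ω ≤ X s ω + ε := by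
  set u := rhoStar X s t ε ω with hu
  have hsu : s ≤ u := s_le_rhoStar hst.le ω
  have hut : u ≤ t := rhoStar_le_t hst.le ω
  have hkey : ∀ p q : ℚ, s ≤ (p:ℝ) → (p:ℝ) ≤ q → (q:ℝ) < u → X q ω < X p ω + ε := by
    intro p q hp hpq hqu
    by_contra hcc
    push_neg at hcc
    have hmem : (q:ℝ) ∈ ({v | s ≤ v ∧ v ≤ t ∧ ω ∈ rSet X s ε v} ∪ {t}) :=
      Or.inl ⟨le_trans hp hpq, by linarith, ⟨p, q, hp, hpq, le_refl _, hcc⟩⟩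
    have h2 : u ≤ (q:ℝ) := csInf_le (rhoStar_bddBelow hst.le ω) hmem
    linarith
  rcases hsu.eq_or_lt with heq | hsu'
  · rw [← heq]; linarith
  by_contra hcc
  push_neg at hcc
  set c := X u ω - (X s ω + ε) with hc
  have hcpos : 0 < c := by rw [hc]; linarith
  obtain ⟨δ₁, hδ₁, h1⟩ := Metric.continuous_iff.mp hcont s (c/2) (by linarith)
  obtain ⟨δ₂, hδ₂, h2⟩ := Metric.continuous_iff.mp hcont u (c/2) (by linarith)
  obtain ⟨p, hp1, hp2⟩ := exists_rat_btwn (show s < min (s + δ₁) u by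
    apply lt_min (by linarith) hsu')
  obtain ⟨q, hq1, hq2⟩ := exists_rat_btwn (show max (u - δ₂) (p:ℝ) < u by
    apply max_lt (by linarith) (lt_of_lt_of_le hp2 (min_le_right _ _)))
  have hpq : (p:ℝ) ≤ q := le_of_lt (lt_of_le_of_lt (le_max_right _ _) hq1)
  have hkey' := hkey p q hp1.le hpq hq2
  have hfp := h1 (p:ℝ) (by
    rw [Real.dist_eq, abs_sub_lt_iff]
    have := lt_of_lt_of_le hp2 (min_le_left _ _)
    constructor <;> linarith)
  have hfq := h2 (q:ℝ) (by
    rw [Real.dist_eq, abs_sub_lt_iff]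
    have := lt_of_le_of_lt (le_max_left (u - δ₂) (p:ℝ)) hq1
    constructor <;> linarith)
  rw [Real.dist_eq, abs_sub_lt_iff] at hfp hfq
  linarith [hfp.1, hfp.2, hfq.1, hfq.2]

end rigid

lemma measSet_le' {Ω : Type*} (mm : MeasurableSpace Ω) {f g : Ω → ℝ} (hf : @Measurable Ω ℝ mm _ f)
    (hg : @Measurable Ω ℝ mm _ g) : @MeasurableSet Ω mm {ω | f ω ≤ g ω} := by
  letI := mm
  exact measurableSet_le hf hg

lemma measSet_lt' {Ω : Type*} (mm : MeasurableSpace Ω) {f g : Ω → ℝ} (hf : @Measurable Ω ℝ mm _ f)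
    (hg : @Measurable Ω ℝ mm _ g) : @MeasurableSet Ω mm {ω | f ω < g ω} := by
  letI := mm
  exact measurableSet_lt hf hg

section meas

variable {Ω : Type*} {m0 : MeasurableSpace Ω} {ℱ : Filtration ℝ m0} {X : ℝ → Ω → ℝ}
  {s t ε : ℝ}

lemma rSet_measurable (hA : Adapted ℱ X) (s ε : ℝ) (v : ℝ) :
    MeasurableSet[ℱ v] (rSet X s ε v) := by
  have hrw : rSet X s ε v = ⋃ (p : ℚ) (q : ℚ),
      {ω | s ≤ (p:ℝ) ∧ (p:ℝ) ≤ (q:ℝ) ∧ (q:ℝ) ≤ v ∧ X p ω + ε ≤ X q ω} := by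
    ext ω
    simp only [rSet, Set.mem_setOf_eq, Set.mem_iUnion]
  rw [hrw]
  refine MeasurableSet.iUnion fun p => MeasurableSet.iUnion fun q => ?_
  by_cases h : s ≤ (p:ℝ) ∧ (p:ℝ) ≤ (q:ℝ) ∧ (q:ℝ) ≤ v
  · have heq : {ω | s ≤ (p:ℝ) ∧ (p:ℝ) ≤ (q:ℝ) ∧ (q:ℝ) ≤ v ∧ X p ω + ε ≤ X q ω}
        = {ω | X (p:ℝ) ω + ε ≤ X (q:ℝ) ω} := by
      ext ω; simp [h.1, h.2.1, h.2.2]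
    rw [heq]
    have hp : Measurable[ℱ v] (X (p:ℝ)) :=
      ((hA (p:ℝ)).mono (ℱ.mono (le_trans h.2.1 h.2.2)) le_rfl)
    have hq : Measurable[ℱ v] (X (q:ℝ)) := ((hA (q:ℝ)).mono (ℱ.mono h.2.2) le_rfl)
    exact measSet_le' (ℱ v) (hp.add_const ε) hq
  · have heq : {ω | s ≤ (p:ℝ) ∧ (p:ℝ) ≤ (q:ℝ) ∧ (q:ℝ) ≤ v ∧ X p ω + ε ≤ X q ω}
        = (∅ : Set Ω) := by
      ext ω; simp only [Set.mem_setOf_eq, Set.mem_empty_iff_false, iff_false]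
      intro hcc; exact h ⟨hcc.1, hcc.2.1, hcc.2.2.1⟩
    rw [heq]
    exact @MeasurableSet.empty Ω (ℱ v)

lemma gidx_piece_meas (hA : Adapted ℱ X) (hst : s ≤ t) (m : ℕ) {i : ℕ} (hi : i ≤ 2 ^ m) :
    MeasurableSet[ℱ (dygrid s t m i)] {ω | gidx X s t ε m ω = i} := by
  have hset : {ω | gidx X s t ε m ω = i} =
      ({ω | 2 ^ m ≤ i ∨ ω ∈ rSet X s ε (dygrid s t m i)} ∩
        ⋂ (j : ℕ) (_ : j < i), {ω | 2 ^ m ≤ j ∨ ω ∈ rSet X s ε (dygrid s t m j)}ᶜ) := by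
    ext ω
    simp only [Set.mem_setOf_eq, Set.mem_inter_iff, Set.mem_iInter, Set.mem_compl_iff]
    constructor
    · rintro rfl
      exact ⟨gidx_spec m ω, fun j hj => Nat.notMem_of_lt_sInf hj⟩
    · rintro ⟨h1, h2⟩
      refine le_antisymm (Nat.sInf_le h1) ?_
      by_contra hcc
      push_neg at hcc
      exact h2 _ hcc (Nat.sInf_mem (⟨2 ^ m, Or.inl le_rfl⟩ :
        Set.Nonempty {j | 2 ^ m ≤ j ∨ ω ∈ rSet X s ε (dygrid s t m j)}))
  rw [hset]
  have hor : ∀ j : ℕ, j ≤ i →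
      MeasurableSet[ℱ (dygrid s t m i)] {ω | 2 ^ m ≤ j ∨ ω ∈ rSet X s ε (dygrid s t m j)} := by
    intro j hj
    by_cases hc : 2 ^ m ≤ j
    · have : {ω : Ω | 2 ^ m ≤ j ∨ ω ∈ rSet X s ε (dygrid s t m j)} = Set.univ := by
        ext ω; simp [hc]
      rw [this]; exact MeasurableSet.univ
    · have : {ω : Ω | 2 ^ m ≤ j ∨ ω ∈ rSet X s ε (dygrid s t m j)}
          = rSet X s ε (dygrid s t m j) := by
        ext ω; simp [hc]
      rw [this]
      exact ℱ.mono (dygrid_mono hst m hj) _ (rSet_measurable hA s ε _)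
  exact (hor i le_rfl).inter
    (MeasurableSet.iInter fun j => MeasurableSet.iInter fun hj => (hor j hj.le).compl)

end meas
section mart

variable {Ω : Type*} {m0 : MeasurableSpace Ω} {P : Measure Ω} [IsProbabilityMeasure P]
  {ℱ : Filtration ℝ m0} {X : ℝ → Ω → ℝ}

/-- Rigidity: a nonnegative continuous martingale cannot be nonincreasing on `[s,t]`
and have a macroscopic decrease, except on a null set. -/
lemma mart_rigid (hX : Martingale X ℱ P)
    (hc : ∀ᵐ ω ∂P, Continuous fun v => X v ω)
    (h0 : ∀ᵐ ω ∂P, ∀ v, 0 ≤ X v ω) {s t δ : ℝ} (hst : s < t) (hδ : 0 < δ) :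
    P ({ω | ∀ p q : ℚ, s ≤ (p:ℝ) → (p:ℝ) ≤ (q:ℝ) → (q:ℝ) ≤ t → X q ω ≤ X p ω} ∩
      {ω | X t ω ≤ X s ω - δ}) = 0 := by
  have hXmeas : ∀ v : ℝ, Measurable (X v) := fun v =>
    ((hX.stronglyAdapted v).mono (ℱ.le v)).measurable
  set A : Set Ω := {ω | ∀ p q : ℚ, s ≤ (p:ℝ) → (p:ℝ) ≤ (q:ℝ) → (q:ℝ) ≤ t → X q ω ≤ X p ω} ∩
      {ω | X t ω ≤ X s ω - δ} with hAdef
  have hAmeas : MeasurableSet A := by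
    apply MeasurableSet.inter
    · have hrw : {ω | ∀ p q : ℚ, s ≤ (p:ℝ) → (p:ℝ) ≤ (q:ℝ) → (q:ℝ) ≤ t → X q ω ≤ X p ω}
          = ⋂ (p : ℚ) (q : ℚ), {ω | s ≤ (p:ℝ) → (p:ℝ) ≤ (q:ℝ) → (q:ℝ) ≤ t → X q ω ≤ X p ω} := by
        ext ω; simp only [Set.mem_setOf_eq, Set.mem_iInter]
      rw [hrw]
      refine MeasurableSet.iInter fun p => MeasurableSet.iInter fun q => ?_
      by_cases h : s ≤ (p:ℝ) ∧ (p:ℝ) ≤ (q:ℝ) ∧ (q:ℝ) ≤ t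
      · have heq : {ω | s ≤ (p:ℝ) → (p:ℝ) ≤ (q:ℝ) → (q:ℝ) ≤ t → X q ω ≤ X p ω}
            = {ω | X (q:ℝ) ω ≤ X (p:ℝ) ω} := by
          ext ω; simp [h.1, h.2.1, h.2.2]
        rw [heq]
        exact measurableSet_le (hXmeas _) (hXmeas _)
      · have heq : {ω | s ≤ (p:ℝ) → (p:ℝ) ≤ (q:ℝ) → (q:ℝ) ≤ t → X q ω ≤ X p ω}
            = Set.univ := by
          ext ω
          simp only [Set.mem_setOf_eq, Set.mem_univ, iff_true]
          intro h1 h2 h3; exact absurd ⟨h1, h2, h3⟩ h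
        rw [heq]; exact MeasurableSet.univ
    · exact measurableSet_le (hXmeas t) ((hXmeas s).sub measurable_const)
  suffices hkey : ∀ ε : ℝ, 0 < ε → (P A).toReal * δ ≤ ε by
    have h1 : (P A).toReal * δ ≤ 0 := by
      by_contra hcc
      push_neg at hcc
      have := hkey ((P A).toReal * δ / 2) (by linarith)
      linarith
    have h2 : (P A).toReal = 0 := by
      have := ENNReal.toReal_nonneg (a := P A)
      nlinarith
    rcases (ENNReal.toReal_eq_zero_iff _).mp h2 with h | h
    · exact h
    · exact absurd h (measure_ne_top P A)
  intro ε hε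
  set Y : ℕ → Ω → ℝ := fun m ω => X (rhoM X s t ε m ω) ω with hYdef
  set Z : Ω → ℝ := fun ω => X (rhoStar X s t ε ω) ω with hZdef
  have h_piece : ∀ m i, i ≤ 2 ^ m →
      MeasurableSet[ℱ (dygrid s t m i)] {ω | gidx X s t ε m ω = i} :=
    fun m i hi => gidx_piece_meas hX.stronglyAdapted.adapted hst.le m hi
  have h_piece0 : ∀ m i, i ≤ 2 ^ m → MeasurableSet {ω | gidx X s t ε m ω = i} :=
    fun m i hi => ℱ.le _ _ (h_piece m i hi)
  have hYrep : ∀ m, Y m = fun ω => ∑ i ∈ Finset.range (2 ^ m + 1),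
      ({ω | gidx X s t ε m ω = i}).indicator (X (dygrid s t m i)) ω := by
    intro m
    funext ω
    rw [Finset.sum_eq_single_of_mem (gidx X s t ε m ω)
      (Finset.mem_range.mpr (Nat.lt_succ_of_le (gidx_le m ω)))]
    · rw [Set.indicator_of_mem (show ω ∈ {ω' | gidx X s t ε m ω' = gidx X s t ε m ω} from rfl)]
      rfl
    · intro i _ hne
      apply Set.indicator_of_notMem
      intro hmem
      exact hne ((Set.mem_setOf_eq ▸ hmem).symm)
  have hYint : ∀ m, Integrable (Y m) P := by
    intro m
    rw [hYrep m]
    apply integrable_finset_sum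
    intro i hi
    exact (hX.integrable _).indicator (h_piece0 m i (Nat.lt_succ_iff.mp (Finset.mem_range.mp hi)))
  have hYmeas : ∀ m, Measurable (Y m) := by
    intro m
    rw [hYrep m]
    apply Finset.measurable_sum
    intro i hi
    exact (hXmeas _).indicator (h_piece0 m i (Nat.lt_succ_iff.mp (Finset.mem_range.mp hi)))
  have hYnonneg : ∀ m, 0 ≤ᵐ[P] Y m := by
    intro m
    filter_upwards [h0] with ω hω
    exact hω _
  have h_opt : ∀ (m : ℕ) (B : Set Ω),
      (∀ i, i ≤ 2 ^ m → MeasurableSet[ℱ (dygrid s t m i)] (B ∩ {ω | gidx X s t ε m ω = i})) →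
      ∫ ω in B, Y m ω ∂P = ∫ ω in B, X t ω ∂P := by
    intro m B hB
    have hB0 : ∀ i, i ≤ 2 ^ m → MeasurableSet (B ∩ {ω | gidx X s t ε m ω = i}) :=
      fun i hi => ℱ.le _ _ (hB i hi)
    have hcover : B = ⋃ i ∈ Finset.range (2 ^ m + 1), (B ∩ {ω | gidx X s t ε m ω = i}) := by
      ext ω
      simp only [Finset.mem_range, Set.mem_iUnion, Set.mem_inter_iff, Set.mem_setOf_eq]
      constructor
      · intro h
        exact ⟨gidx X s t ε m ω, Nat.lt_succ_of_le (gidx_le m ω), h, rfl⟩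
      · rintro ⟨i, _, h, _⟩; exact h
    have hdisj : Set.Pairwise (Finset.range (2 ^ m + 1) : Set ℕ)
        (Function.onFun Disjoint fun i => B ∩ {ω | gidx X s t ε m ω = i}) := by
      intro i _ j _ hij
      apply Set.disjoint_left.mpr
      rintro ω ⟨_, hi⟩ ⟨_, hj⟩
      rw [Set.mem_setOf_eq] at hi hj
      exact hij (hi ▸ hj ▸ rfl : i = j)
    rw [hcover,
      integral_biUnion_finset _ (fun i hi => hB0 i (Nat.lt_succ_iff.mp (Finset.mem_range.mp hi)))
        hdisj (fun i _ => (hYint m).integrableOn),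
      integral_biUnion_finset _ (fun i hi => hB0 i (Nat.lt_succ_iff.mp (Finset.mem_range.mp hi)))
        hdisj (fun i _ => (hX.integrable t).integrableOn)]
    apply Finset.sum_congr rfl
    intro i hi
    have hile : i ≤ 2 ^ m := Nat.lt_succ_iff.mp (Finset.mem_range.mp hi)
    have hieq : ∫ ω in B ∩ {ω | gidx X s t ε m ω = i}, Y m ω ∂P
        = ∫ ω in B ∩ {ω | gidx X s t ε m ω = i}, X (dygrid s t m i) ω ∂P := by
      apply setIntegral_congr_fun (hB0 i hile)
      intro ω hω
      have hgi : gidx X s t ε m ω = i := hω.2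
      simp only [hYdef, rhoM, hgi]
    rw [hieq]
    exact hX.setIntegral_eq (dygrid_mem hst.le m hile).2 (hB i hile)
  have hEY : ∀ m, ∫ ω, Y m ω ∂P = ∫ ω, X t ω ∂P := by
    intro m
    have := h_opt m Set.univ (fun i hi => by rw [Set.univ_inter]; exact h_piece m i hi)
    simpa [setIntegral_univ] using this
  have hEst : ∫ ω, X s ω ∂P = ∫ ω, X t ω ∂P := by
    have := hX.setIntegral_eq hst.le (MeasurableSet.univ : MeasurableSet[ℱ s] Set.univ)
    simpa [setIntegral_univ] using this
  have hgood : ∀ᵐ ω ∂P, Continuous (fun v => X v ω) ∧ ∀ v, 0 ≤ X v ω := hc.and h0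
  have hZtend : ∀ᵐ ω ∂P, Tendsto (fun m => Y m ω) atTop (nhds (Z ω)) := by
    filter_upwards [hgood] with ω hω
    exact (hω.1.continuousAt.tendsto).comp (tendsto_rhoM hst ω)
  have hZmeas : AEStronglyMeasurable Z P :=
    aestronglyMeasurable_of_tendsto_ae atTop (fun m => (hYmeas m).aestronglyMeasurable) hZtend
  have hZbound : ∀ᵐ ω ∂P, 0 ≤ Z ω ∧ Z ω ≤ X s ω + ε := by
    filter_upwards [hgood] with ω hω
    exact ⟨hω.2 _, rhoStar_bound hst hε ω hω.1⟩
  have hZint : Integrable Z P := by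
    apply Integrable.mono' ((hX.integrable s).add (integrable_const ε)) hZmeas
    filter_upwards [hZbound] with ω h
    rw [Real.norm_eq_abs, abs_of_nonneg h.1]
    exact h.2
  have hmin_int : ∀ n : ℕ, Integrable (fun ω => min (X t ω) (n:ℝ)) P := fun n =>
    (hX.integrable t).inf (integrable_const _)
  -- lower bound : ∫ X t ≤ ∫ Z
  have hlow : ∫ ω, X t ω ∂P ≤ ∫ ω, Z ω ∂P := by
    have hmain : ∀ η : ℝ, 0 < η → ∫ ω, X t ω ∂P ≤ ∫ ω, Z ω ∂P + η := by
      intro η hη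
      obtain ⟨n, hn⟩ : ∃ n : ℕ, ∫ ω, (X t ω - min (X t ω) (n:ℝ)) ∂P ≤ η / 2 := by
        have htd : Tendsto (fun n : ℕ => ∫ ω, min (X t ω) (n:ℝ) ∂P) atTop
            (nhds (∫ ω, X t ω ∂P)) := by
          apply tendsto_integral_of_dominated_convergence (fun ω => |X t ω|)
            (fun n => ((hXmeas t).min measurable_const).aestronglyMeasurable)
            (hX.integrable t).abs
          · intro n
            filter_upwards [h0] with ω hω
            rw [Real.norm_eq_abs, abs_of_nonneg (le_min (hω t) (by positivity))]
            exact (min_le_left _ _).trans (le_abs_self _)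
          · filter_upwards with ω
            apply tendsto_atTop_of_eventually_const (i₀ := ⌈X t ω⌉₊)
            intro n hn
            exact min_eq_left ((Nat.le_ceil _).trans (by exact_mod_cast hn))
        have h2 : Tendsto (fun n : ℕ => ∫ ω, X t ω ∂P - ∫ ω, min (X t ω) (n:ℝ) ∂P) atTop
            (nhds 0) := by
          have := htd.const_sub (∫ ω, X t ω ∂P)
          simpa using this
        obtain ⟨n, hn'⟩ := (h2.eventually_lt_const (show (0:ℝ) < η/2 by linarith)).exists
        refine ⟨n, ?_⟩
        rw [integral_sub (hX.integrable t) (hmin_int n)]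
        exact hn'.le
      set θ : ℝ := η / (2 * ((n:ℝ) + 1)) with hθ
      have hθpos : 0 < θ := by positivity
      set K : ℝ := max 1 ((∫ ω, X t ω ∂P) / θ) with hK
      have hK1 : (1:ℝ) ≤ K := le_max_left _ _
      have hKpos : 0 < K := lt_of_lt_of_le one_pos hK1
      have htrunc : ∀ m, ∫ ω, X t ω ∂P - η ≤ ∫ ω, min (Y m ω) K ∂P := by
        intro m
        set B : Set Ω := {ω | K < Y m ω} with hB
        have hBmeas : MeasurableSet B := measurableSet_lt measurable_const (hYmeas m)
        have hPB : (P B).toReal ≤ θ := by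
          have hmar := mul_meas_ge_le_integral_of_nonneg (hYnonneg m) (hYint m) K
          have h1 : (P B).toReal ≤ (P {ω | K ≤ Y m ω}).toReal :=
            ENNReal.toReal_mono (measure_ne_top _ _)
              (measure_mono fun ω (h : K < Y m ω) => h.le)
          have h2 : K * (P B).toReal ≤ ∫ ω, X t ω ∂P := by
            calc K * (P B).toReal ≤ K * (P {ω | K ≤ Y m ω}).toReal := by nlinarith
            _ ≤ ∫ ω, Y m ω ∂P := hmar
            _ = ∫ ω, X t ω ∂P := hEY m
          have h3 : (∫ ω, X t ω ∂P) ≤ θ * K := by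
            have h4 : (∫ ω, X t ω ∂P) / θ ≤ K := le_max_right _ _
            calc (∫ ω, X t ω ∂P) = θ * ((∫ ω, X t ω ∂P) / θ) := by field_simp
            _ ≤ θ * K := by nlinarith
          nlinarith [ENNReal.toReal_nonneg (a := P B)]
        have hBint : ∫ ω in B, X t ω ∂P ≤ η := by
          have hsplit : ∫ ω in B, (X t ω - min (X t ω) (n:ℝ)) ∂P
              = ∫ ω in B, X t ω ∂P - ∫ ω in B, min (X t ω) (n:ℝ) ∂P :=
            integral_sub ((hX.integrable t).integrableOn) ((hmin_int n).integrableOn)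
          have h1 : ∫ ω in B, (X t ω - min (X t ω) (n:ℝ)) ∂P ≤ η/2 := by
            refine le_trans (setIntegral_le_integral ((hX.integrable t).sub (hmin_int n)) ?_) hn
            filter_upwards with ω
            simp only [Pi.zero_apply, sub_nonneg]
            exact min_le_left _ _
          have h2 : ∫ ω in B, min (X t ω) (n:ℝ) ∂P ≤ (n:ℝ) * (P B).toReal := by
            calc ∫ ω in B, min (X t ω) (n:ℝ) ∂P ≤ ∫ _ω in B, (n:ℝ) ∂P := by
                  apply setIntegral_mono_on ((hmin_int n).integrableOn)
                    (integrableOn_const (measure_lt_top P B).ne) hBmeas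
                  intro ω _
                  exact min_le_right _ _
            _ = (n:ℝ) * (P B).toReal := by rw [setIntegral_const, smul_eq_mul, measureReal_def]; ring
          have h3 : ((n:ℝ)) * (P B).toReal ≤ η/2 := by
            have hn0 : (0:ℝ) ≤ n := Nat.cast_nonneg n
            have : ((n:ℝ) + 1) * θ = η/2 := by rw [hθ]; field_simp
            nlinarith [ENNReal.toReal_nonneg (a := P B)]
          linarith
        have hBpieces : ∀ i, i ≤ 2 ^ m →
            MeasurableSet[ℱ (dygrid s t m i)] (B ∩ {ω | gidx X s t ε m ω = i}) := by
          intro i hi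
          have heq : B ∩ {ω | gidx X s t ε m ω = i}
              = {ω | K < X (dygrid s t m i) ω} ∩ {ω | gidx X s t ε m ω = i} := by
            ext ω
            simp only [hB, Set.mem_inter_iff, Set.mem_setOf_eq]
            constructor
            · rintro ⟨h1, h2⟩
              refine ⟨?_, h2⟩
              simp only [hYdef, rhoM, h2] at h1
              exact h1
            · rintro ⟨h1, h2⟩
              refine ⟨?_, h2⟩
              simp only [hYdef, rhoM, h2]
              exact h1
          rw [heq]
          exact (measSet_lt' (ℱ (dygrid s t m i)) measurable_const
            ((hX.stronglyAdapted _).measurable)).inter (h_piece m i hi)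
        have hBY : ∫ ω in B, Y m ω ∂P = ∫ ω in B, X t ω ∂P := h_opt m B hBpieces
        have hpt : ∀ ω, Y m ω - B.indicator (Y m) ω ≤ min (Y m ω) K := by
          intro ω
          by_cases h : ω ∈ B
          · rw [Set.indicator_of_mem h, sub_self]
            have hKY : K < Y m ω := h
            exact le_min (by linarith) (by linarith)
          · rw [Set.indicator_of_notMem h, sub_zero]
            exact le_min le_rfl (not_lt.mp h)
        have hind_int : Integrable (B.indicator (Y m)) P := (hYint m).indicator hBmeas
        have hminY_int : Integrable (fun ω => min (Y m ω) K) P :=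
          (hYint m).inf (integrable_const K)
        have h5 : ∫ ω, (Y m ω - B.indicator (Y m) ω) ∂P ≤ ∫ ω, min (Y m ω) K ∂P :=
          integral_mono ((hYint m).sub hind_int) hminY_int hpt
        rw [integral_sub (hYint m) hind_int, integral_indicator hBmeas, hBY, hEY m] at h5
        linarith
      have hlim : Tendsto (fun m => ∫ ω, min (Y m ω) K ∂P) atTop
          (nhds (∫ ω, min (Z ω) K ∂P)) := by
        apply tendsto_integral_of_dominated_convergence (fun _ => K)
          (fun m => ((hYmeas m).min measurable_const).aestronglyMeasurable)
          (integrable_const K)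
        · intro m
          filter_upwards [h0] with ω hω
          rw [Real.norm_eq_abs, abs_of_nonneg (le_min (hω _) hKpos.le)]
          exact min_le_right _ _
        · filter_upwards [hZtend] with ω hω
          exact ((continuous_id.min continuous_const).continuousAt.tendsto).comp hω
      have h6 : ∫ ω, X t ω ∂P - η ≤ ∫ ω, min (Z ω) K ∂P :=
        ge_of_tendsto hlim (Eventually.of_forall htrunc)
      have h7 : ∫ ω, min (Z ω) K ∂P ≤ ∫ ω, Z ω ∂P :=
        integral_mono (hZint.inf (integrable_const K)) hZint (fun ω => min_le_left _ _)
      linarith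
    by_contra hcc
    push_neg at hcc
    have := hmain ((∫ ω, X t ω ∂P - ∫ ω, Z ω ∂P) / 2) (by linarith)
    linarith
  -- upper bound
  have hup : ∫ ω, Z ω ∂P ≤ ∫ ω, X s ω ∂P + ε - (δ + ε) * (P A).toReal := by
    have hZA : ∀ᵐ ω ∂(P.restrict A), Z ω ≤ X s ω - δ := by
      rw [ae_restrict_iff' hAmeas]
      filter_upwards [hgood] with ω hω hmem
      obtain ⟨hmono, hdrop⟩ := hmem
      have hTempty : {v | s ≤ v ∧ v ≤ t ∧ ω ∈ rSet X s ε v} = (∅ : Set ℝ) := by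
        ext v
        simp only [Set.mem_setOf_eq, Set.mem_empty_iff_false, iff_false]
        rintro ⟨h1, h2, p, q, hp, hpq, hqv, hrise⟩
        have := hmono p q hp hpq (le_trans hqv h2)
        linarith
      have hrho : rhoStar X s t ε ω = t := by
        rw [rhoStar, hTempty]
        simp
      simp only [hZdef, hrho]
      exact hdrop
    have hZA' : ∫ ω in A, Z ω ∂P ≤ ∫ ω in A, (X s ω - δ) ∂P :=
      integral_mono_ae hZint.integrableOn
        (((hX.integrable s).sub (integrable_const δ)).integrableOn) hZA
    have hZAc : ∫ ω in Aᶜ, Z ω ∂P ≤ ∫ ω in Aᶜ, (X s ω + ε) ∂P := by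
      apply integral_mono_ae hZint.integrableOn
        (((hX.integrable s).add (integrable_const ε)).integrableOn)
      exact ae_restrict_of_ae (by filter_upwards [hZbound] with ω h using h.2)
    have hsplitZ : ∫ ω, Z ω ∂P = ∫ ω in A, Z ω ∂P + ∫ ω in Aᶜ, Z ω ∂P :=
      (integral_add_compl hAmeas hZint).symm
    have hsplitXs : ∫ ω in A, X s ω ∂P + ∫ ω in Aᶜ, X s ω ∂P = ∫ ω, X s ω ∂P :=
      integral_add_compl hAmeas (hX.integrable s)
    have hA1 : ∫ ω in A, (X s ω - δ) ∂P = ∫ ω in A, X s ω ∂P - δ * (P A).toReal := by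
      rw [integral_sub (hX.integrable s).integrableOn ((integrable_const δ).integrableOn),
        setIntegral_const, smul_eq_mul, measureReal_def]
      ring
    have hA2 : ∫ ω in Aᶜ, (X s ω + ε) ∂P = ∫ ω in Aᶜ, X s ω ∂P + ε * (P Aᶜ).toReal := by
      rw [integral_add (hX.integrable s).integrableOn ((integrable_const ε).integrableOn),
        setIntegral_const, smul_eq_mul, measureReal_def]
      ring
    have hPAc : (P Aᶜ).toReal = 1 - (P A).toReal := by
      rw [prob_compl_eq_one_sub hAmeas,
        ENNReal.toReal_sub_of_le prob_le_one ENNReal.one_ne_top, ENNReal.toReal_one]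
    have hr1 : (δ + ε) * (P A).toReal = δ * (P A).toReal + ε * (P A).toReal := by ring
    have hr2 : ε * (P Aᶜ).toReal = ε - ε * (P A).toReal := by rw [hPAc]; ring
    linarith [hZA', hZAc, hsplitZ, hsplitXs, hA1, hA2]
  have hPAnn : 0 ≤ (P A).toReal := ENNReal.toReal_nonneg
  nlinarith [le_trans hlow hup, hEst]

end mart
section locmart

variable {Ω : Type*} {m0 : MeasurableSpace Ω} {P : Measure Ω} [IsProbabilityMeasure P]
  {ℱ : Filtration ℝ m0} {M : ℝ → Ω → ℝ}

/-- Rigidity for local martingales: on the event that the path is nonincreasing along the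
rationals of `[s,t]`, we a.s. have `M t = M s`. -/
lemma locmart_rigid
    (hcont : ∀ᵐ ω ∂P, Continuous fun v => M v ω)
    (hpos : ∀ᵐ ω ∂P, ∀ v : ℝ, 0 < M v ω)
    {τ : ℕ → Ω → ℝ}
    (hτtend : ∀ᵐ ω ∂P, Tendsto (fun n => τ n ω) atTop atTop)
    (hτmart : ∀ n, Martingale (MeasureTheory.stoppedProcess M (fun ω => ((τ n ω : ℝ) : WithTop ℝ))) ℱ P)
    {s t : ℝ} (hst : s < t) :
    ∀ᵐ ω ∂P, (∀ p q : ℚ, s ≤ (p:ℝ) → (p:ℝ) ≤ (q:ℝ) → (q:ℝ) ≤ t → M (q:ℝ) ω ≤ M (p:ℝ) ω) →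
      M t ω = M s ω := by
  have hXc : ∀ n, ∀ᵐ ω ∂P, Continuous fun v => MeasureTheory.stoppedProcess M (fun ω => ((τ n ω : ℝ) : WithTop ℝ)) v ω := by
    intro n
    filter_upwards [hcont] with ω hω
    have e : (fun v => MeasureTheory.stoppedProcess M (fun ω => ((τ n ω : ℝ) : WithTop ℝ)) v ω)
        = fun v => M (min v (τ n ω)) ω := by
      funext v; simp only [MeasureTheory.stoppedProcess, ← WithTop.coe_min]
      rw [WithTop.untopA_eq_untop WithTop.coe_ne_top, WithTop.untop_coe]
    rw [e]
    exact hω.comp (continuous_id.min continuous_const)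
  have hX0 : ∀ n, ∀ᵐ ω ∂P, ∀ v, 0 ≤ MeasureTheory.stoppedProcess M (fun ω => ((τ n ω : ℝ) : WithTop ℝ)) v ω := by
    intro n
    filter_upwards [hpos] with ω hω v
    exact (hω _).le
  have hbad : ∀ (k : ℕ) (n : ℕ),
      P ({ω | ∀ p q : ℚ, s ≤ (p:ℝ) → (p:ℝ) ≤ (q:ℝ) → (q:ℝ) ≤ t → M (q:ℝ) ω ≤ M (p:ℝ) ω} ∩
        {ω | M t ω ≤ M s ω - 1/((k:ℝ)+1)} ∩ {ω | t ≤ τ n ω}) = 0 := by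
    intro k n
    have hnull := mart_rigid (hτmart n) (hXc n) (hX0 n) hst
      (show (0:ℝ) < 1/((k:ℝ)+1) by positivity)
    apply measure_mono_null ?_ hnull
    rintro ω ⟨⟨hmono, hdrop⟩, hτ⟩
    rw [Set.mem_setOf_eq] at hmono hdrop
    have heqv : ∀ v : ℝ, v ≤ t → MeasureTheory.stoppedProcess M (fun ω => ((τ n ω : ℝ) : WithTop ℝ)) v ω = M v ω := by
      intro v hv
      rw [Set.mem_setOf_eq] at hτ
      rw [MeasureTheory.stoppedProcess_eq_of_le (u := M) (τ := fun ω => ((τ n ω : ℝ) : WithTop ℝ)) (WithTop.coe_le_coe.mpr (le_trans hv hτ))]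
    refine ⟨?_, ?_⟩
    · intro p q hp hpq hq
      rw [heqv _ hq, heqv _ (le_trans hpq hq)]
      exact hmono p q hp hpq hq
    · rw [Set.mem_setOf_eq, heqv t le_rfl, heqv s hst.le]
      exact hdrop
  have hbad2 : ∀ k : ℕ,
      P ({ω | ∀ p q : ℚ, s ≤ (p:ℝ) → (p:ℝ) ≤ (q:ℝ) → (q:ℝ) ≤ t → M (q:ℝ) ω ≤ M (p:ℝ) ω} ∩
        {ω | M t ω ≤ M s ω - 1/((k:ℝ)+1)}) = 0 := by
    intro k
    set B := {ω | ∀ p q : ℚ, s ≤ (p:ℝ) → (p:ℝ) ≤ (q:ℝ) → (q:ℝ) ≤ t → M (q:ℝ) ω ≤ M (p:ℝ) ω} ∩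
        {ω | M t ω ≤ M s ω - 1/((k:ℝ)+1)} with hB
    have hsub : B ⊆ (⋃ n, B ∩ {ω | t ≤ τ n ω}) ∪
        {ω | ¬ Tendsto (fun n => τ n ω) atTop atTop} := by
      intro ω hω
      by_cases hten : Tendsto (fun n => τ n ω) atTop atTop
      · obtain ⟨n, hn⟩ := (hten.eventually_ge_atTop t).exists
        exact Or.inl (Set.mem_iUnion.mpr ⟨n, hω, hn⟩)
      · exact Or.inr hten
    refine measure_mono_null hsub (measure_union_null (measure_iUnion_null fun n => ?_) ?_)
    · exact hbad k n
    · exact ae_iff.mp hτtend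
  have hae : ∀ᵐ ω ∂P, ∀ k : ℕ,
      ω ∉ ({ω | ∀ p q : ℚ, s ≤ (p:ℝ) → (p:ℝ) ≤ (q:ℝ) → (q:ℝ) ≤ t → M (q:ℝ) ω ≤ M (p:ℝ) ω} ∩
        {ω | M t ω ≤ M s ω - 1/((k:ℝ)+1)}) :=
    ae_all_iff.mpr fun k => measure_eq_zero_iff_ae_notMem.mp (hbad2 k)
  filter_upwards [hae, hcont] with ω hk hcw hmono
  have hle : M t ω ≤ M s ω := cont_rat_mono hcw hmono s t le_rfl hst.le le_rfl
  have hge : M s ω ≤ M t ω := by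
    by_contra hcc
    push_neg at hcc
    obtain ⟨k, hk'⟩ := exists_nat_one_div_lt (show (0:ℝ) < M s ω - M t ω by linarith)
    exact hk k ⟨hmono, by
      simp only [Set.mem_setOf_eq]
      linarith⟩
  exact le_antisymm hle hge

/-- The event that the path is nonincreasing along all rationals `≥ N` is null. -/
lemma nonincr_null
    (hcont : ∀ᵐ ω ∂P, Continuous fun v => M v ω)
    (hpos : ∀ᵐ ω ∂P, ∀ v : ℝ, 0 < M v ω)
    {τ : ℕ → Ω → ℝ}
    (hτtend : ∀ᵐ ω ∂P, Tendsto (fun n => τ n ω) atTop atTop)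
    (hτmart : ∀ n, Martingale (MeasureTheory.stoppedProcess M (fun ω => ((τ n ω : ℝ) : WithTop ℝ))) ℱ P)
    (hnconst : ∀ s : ℝ, 0 ≤ s → P {ω | ∀ u : ℝ, s ≤ u → M u ω = M s ω} = 0) (N : ℕ) :
    P {ω | ∀ p q : ℚ, (N:ℝ) ≤ (p:ℝ) → (p:ℝ) ≤ (q:ℝ) → M (q:ℝ) ω ≤ M (p:ℝ) ω} = 0 := by
  have hrig : ∀ᵐ ω ∂P, ∀ q : ℚ, (N:ℝ) < (q:ℝ) →
      ((∀ p r : ℚ, (N:ℝ) ≤ (p:ℝ) → (p:ℝ) ≤ (r:ℝ) → (r:ℝ) ≤ (q:ℝ) → M (r:ℝ) ω ≤ M (p:ℝ) ω) →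
        M (q:ℝ) ω = M (N:ℝ) ω) := by
    rw [ae_all_iff]
    intro q
    by_cases hq : (N:ℝ) < (q:ℝ)
    · filter_upwards [locmart_rigid hcont hpos hτtend hτmart hq] with ω h
      intro _ hmono
      exact h hmono
    · filter_upwards with ω hq'
      exact absurd hq' hq
  have hconst := hnconst (N:ℝ) (Nat.cast_nonneg N)
  apply measure_mono_null
    (?_ : _ ⊆ {ω | ∀ u : ℝ, (N:ℝ) ≤ u → M u ω = M (N:ℝ) ω} ∪
      {ω | ¬((∀ q : ℚ, (N:ℝ) < (q:ℝ) →
        ((∀ p r : ℚ, (N:ℝ) ≤ (p:ℝ) → (p:ℝ) ≤ (r:ℝ) → (r:ℝ) ≤ (q:ℝ) → M (r:ℝ) ω ≤ M (p:ℝ) ω) →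
          M (q:ℝ) ω = M (N:ℝ) ω)) ∧ Continuous fun v => M v ω)})
    (measure_union_null hconst (ae_iff.mp (hrig.and hcont)))
  intro ω hω
  rw [Set.mem_setOf_eq] at hω
  by_cases hgood : (∀ q : ℚ, (N:ℝ) < (q:ℝ) →
      ((∀ p r : ℚ, (N:ℝ) ≤ (p:ℝ) → (p:ℝ) ≤ (r:ℝ) → (r:ℝ) ≤ (q:ℝ) → M (r:ℝ) ω ≤ M (p:ℝ) ω) →
        M (q:ℝ) ω = M (N:ℝ) ω)) ∧ Continuous fun v => M v ω
  · left
    rw [Set.mem_setOf_eq]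
    apply cont_rat_const hgood.2
    intro q hNq
    rcases hNq.eq_or_lt with heq | hlt
    · rw [← heq]
    · exact hgood.1 q hlt fun p r hp hpr hr => hω p r hp hpr
  · right
    exact hgood

end locmart
lemma dygrid_lt {s t : ℝ} (hst : s < t) (m : ℕ) {i i' : ℕ} (h : i < i') :
    dygrid s t m i < dygrid s t m i' := by
  have hii : (i:ℝ) < (i':ℝ) := by exact_mod_cast h
  have h2 : (0:ℝ) < 2 ^ m := by positivity
  have key : 0 < ((i':ℝ) - i) * (t - s) / 2 ^ m :=
    div_pos (mul_pos (by linarith) (by linarith)) h2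
  have hring : ((i':ℝ) - i) * (t - s) / 2 ^ m
      = (i':ℝ) * (t-s) / 2^m - (i:ℝ)*(t-s)/2^m := by ring
  rw [hring] at key
  unfold dygrid
  linarith

lemma chain_mono {f : ℝ → ℝ} {N : ℕ}
    (h : ∀ n : ℕ, N ≤ n → ∀ x y : ℝ, (n:ℝ) ≤ x → x ≤ y → y ≤ (n:ℝ)+1 → f y ≤ f x) :
    ∀ x y : ℝ, (N:ℝ) ≤ x → x ≤ y → f y ≤ f x := by
  have claim : ∀ k : ℕ, ∀ x y : ℝ, (N:ℝ) ≤ x → x ≤ y → y ≤ (N:ℝ) + k → f y ≤ f x := by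
    intro k
    induction k with
    | zero =>
      intro x y hNx hxy hyk
      push_cast at hyk
      exact h N le_rfl x y hNx hxy (by linarith)
    | succ k ih =>
      intro x y hNx hxy hyk
      by_cases hy : y ≤ (N:ℝ) + k
      · exact ih x y hNx hxy hy
      push_neg at hy
      have h1 : f y ≤ f (max x ((N:ℝ) + k)) := by
        apply h (N + k) (Nat.le_add_right N k)
        · push_cast; exact le_max_right _ _
        · exact max_le hxy hy.le
        · push_cast; push_cast at hyk; linarith
      have h2 : f (max x ((N:ℝ) + k)) ≤ f x := by
        rcases le_total ((N:ℝ)+k) x with hc | hc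
        · rw [max_eq_left hc]
        · rw [max_eq_right hc]
          exact ih x ((N:ℝ)+k) hNx hc le_rfl
      linarith
  intro x y hNx hxy
  obtain ⟨k, hk⟩ := exists_nat_ge (y - (N:ℝ))
  exact claim k x y hNx hxy (by linarith)

/-- Let `M` be a positive continuous local martingale (given via a localising
sequence of stopping times making the stopped processes martingales) whose paths a.s. never
become eventually constant. Then there is an increasing sequence `(a_k)` of nonnegative reals
tending to infinity such that for every `k` the event
`{M_{a_k} ≥ M_{a_{k+1}} ≥ ⋯}` is null. -/
theorem exists_seq_not_eventually_decreasing
    {Ω : Type*} {m0 : MeasurableSpace Ω} {P : Measure Ω} [IsProbabilityMeasure P]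
    {ℱ : Filtration ℝ m0} {M : ℝ → Ω → ℝ}
    (hadapted : Adapted ℱ M)
    (hcont : ∀ᵐ ω ∂P, Continuous (fun t => M t ω))
    (hpos : ∀ᵐ ω ∂P, ∀ t : ℝ, 0 < M t ω)
    (hloc : ∃ τ : ℕ → Ω → ℝ,
      (∀ n, IsStoppingTime ℱ (fun ω => ((τ n ω : ℝ) : WithTop ℝ))) ∧
      (∀ᵐ ω ∂P, Tendsto (fun n => τ n ω) atTop atTop) ∧
      (∀ n, Martingale (MeasureTheory.stoppedProcess M (fun ω => ((τ n ω : ℝ) : WithTop ℝ))) ℱ P))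
    (hnconst : ∀ s : ℝ, 0 ≤ s → P {ω | ∀ t : ℝ, s ≤ t → M t ω = M s ω} = 0) :
    ∃ a : ℕ → ℝ, StrictMono a ∧ (∀ k, 0 ≤ a k) ∧ Tendsto a atTop atTop ∧
      ∀ k : ℕ, P {ω | ∀ j : ℕ, k ≤ j → M (a (j + 1)) ω ≤ M (a j) ω} = 0 := by
  obtain ⟨τ, hτst, hτtend, hτmart⟩ := hloc
  have hMnull : ∀ N : ℕ,
      P {ω | ∀ p q : ℚ, (N:ℝ) ≤ (p:ℝ) → (p:ℝ) ≤ (q:ℝ) → M (q:ℝ) ω ≤ M (p:ℝ) ω} = 0 :=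
    fun N => nonincr_null hcont hpos hτtend hτmart hnconst N
  have hMmeas : ∀ v : ℝ, Measurable (M v) := fun v => ((hadapted v).mono (ℱ.le v) le_rfl)
  -- the events "nonincreasing along the level-j dyadic grid of [n, n+1]"
  set D : ℕ → ℕ → Set Ω := fun n j =>
    {ω | ∀ i : ℕ, i < 2 ^ j →
      M (dygrid (n:ℝ) ((n:ℝ)+1) j (i+1)) ω ≤ M (dygrid (n:ℝ) ((n:ℝ)+1) j i) ω} with hD
  have hDmem : ∀ n j ω, ω ∈ D n j ↔ ∀ i : ℕ, i < 2 ^ j →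
      M (dygrid (n:ℝ) ((n:ℝ)+1) j (i+1)) ω ≤ M (dygrid (n:ℝ) ((n:ℝ)+1) j i) ω :=
    fun n j ω => Iff.rfl
  have hDmeas : ∀ n j, MeasurableSet (D n j) := by
    intro n j
    have hrw : D n j = ⋂ (i : ℕ) (_ : i < 2 ^ j),
        {ω | M (dygrid (n:ℝ) ((n:ℝ)+1) j (i+1)) ω ≤ M (dygrid (n:ℝ) ((n:ℝ)+1) j i) ω} := by
      ext ω; simp only [hD, Set.mem_setOf_eq, Set.mem_iInter]
    rw [hrw]
    exact MeasurableSet.iInter fun i => MeasurableSet.iInter fun _ =>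
      measurableSet_le (hMmeas _) (hMmeas _)
  have hDanti : ∀ n, Antitone (D n) := by
    intro n
    apply antitone_nat_of_succ_le
    intro j ω hω
    rw [hDmem] at hω ⊢
    intro i hi
    have hpow : 2 ^ (j+1) = 2 * 2 ^ j := by rw [pow_succ]; ring
    have e1 : dygrid (n:ℝ) ((n:ℝ)+1) j i = dygrid (n:ℝ) ((n:ℝ)+1) (j+1) (2*i) := by
      unfold dygrid
      have h2 : (2:ℝ) ^ j ≠ 0 := by positivity
      rw [pow_succ]
      push_cast
      field_simp
    have e2 : dygrid (n:ℝ) ((n:ℝ)+1) j (i+1) = dygrid (n:ℝ) ((n:ℝ)+1) (j+1) (2*i+2) := by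
      unfold dygrid
      have h2 : (2:ℝ) ^ j ≠ 0 := by positivity
      rw [pow_succ]
      push_cast
      field_simp
    calc M (dygrid (n:ℝ) ((n:ℝ)+1) j (i+1)) ω
        = M (dygrid (n:ℝ) ((n:ℝ)+1) (j+1) (2*i+2)) ω := by rw [e2]
      _ ≤ M (dygrid (n:ℝ) ((n:ℝ)+1) (j+1) (2*i+1)) ω := by
          have := hω (2*i+1) (by omega)
          simpa using this
      _ ≤ M (dygrid (n:ℝ) ((n:ℝ)+1) (j+1) (2*i)) ω := by
          have := hω (2*i) (by omega)
          simpa using this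
      _ = M (dygrid (n:ℝ) ((n:ℝ)+1) j i) ω := by rw [← e1]
  -- choose fine enough levels
  have hchoice : ∀ n : ℕ, ∃ j : ℕ, P (D n j \ ⋂ j', D n j') < (2⁻¹ : ℝ≥0∞) ^ n := by
    intro n
    have htend : Tendsto (fun j => P (D n j)) atTop (nhds (P (⋂ j', D n j'))) :=
      tendsto_measure_iInter_atTop (fun j => (hDmeas n j).nullMeasurableSet) (hDanti n)
        ⟨0, measure_ne_top _ _⟩
    have hne0 : (2⁻¹ : ℝ≥0∞) ^ n ≠ 0 :=
      pow_ne_zero _ (ENNReal.inv_ne_zero.mpr ENNReal.ofNat_ne_top)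
    have hlt : P (⋂ j', D n j') < P (⋂ j', D n j') + (2⁻¹:ℝ≥0∞)^n :=
      ENNReal.lt_add_right (measure_ne_top _ _) hne0
    obtain ⟨j, hj⟩ := (htend.eventually_lt_const hlt).exists
    exact ⟨j, measure_diff_lt_of_lt_add
      (MeasurableSet.iInter fun j' => hDmeas n j').nullMeasurableSet
      (Set.iInter_subset _ j) (measure_ne_top _ _) hj⟩
  choose jl hjl using hchoice
  -- index bookkeeping
  set c : ℕ → ℕ := fun n => 2 ^ (jl n) with hc
  set K : ℕ → ℕ := fun n => ∑ m ∈ Finset.range n, c m with hK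
  have hKsucc : ∀ n, K (n+1) = K n + c n := by
    intro n; simp [hK, Finset.sum_range_succ]
  have hcpos : ∀ n, 0 < c n := fun n => pow_pos two_pos _
  have hKge : ∀ n, n ≤ K n := by
    intro n
    induction n with
    | zero => exact Nat.zero_le _
    | succ n ih =>
      have := hcpos n
      have := hKsucc n
      omega
  have hKmono : Monotone K := monotone_nat_of_le_succ fun n => by
    have := hKsucc n; omega
  set blk : ℕ → ℕ := fun i => Nat.findGreatest (fun n => K n ≤ i) i with hblk
  have hblk_le : ∀ i, K (blk i) ≤ i := by
    intro i
    exact Nat.findGreatest_spec (P := fun n => K n ≤ i) (m := 0) (Nat.zero_le i) (by simp [hK])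
  have hblk_lt : ∀ i, i < K (blk i + 1) := by
    intro i
    by_contra hcc
    push_neg at hcc
    exact Nat.findGreatest_is_greatest (P := fun n => K n ≤ i) (Nat.lt_succ_self _)
      (le_trans (hKge _) hcc) hcc
  have hblk_eq : ∀ n i, K n ≤ i → i < K (n+1) → blk i = n := by
    intro n i h1 h2
    have hge : n ≤ blk i := Nat.le_findGreatest (P := fun n => K n ≤ i) (le_trans (hKge n) h1) h1
    have hle : blk i ≤ n := by
      by_contra hcc
      push_neg at hcc
      have h3 : K (n+1) ≤ K (blk i) := hKmono hcc
      have h4 := hblk_le i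
      omega
    omega
  -- the sequence
  set a : ℕ → ℝ := fun i =>
    dygrid (blk i : ℝ) ((blk i : ℝ)+1) (jl (blk i)) (i - K (blk i)) with ha
  have hablock : ∀ n i, i ≤ 2 ^ (jl n) →
      a (K n + i) = dygrid (n:ℝ) ((n:ℝ)+1) (jl n) i := by
    intro n i hi
    rcases lt_or_eq_of_le hi with hlt | heq
    · have hb : blk (K n + i) = n := hblk_eq n _ (Nat.le_add_right _ _) (by
        have := hKsucc n
        simp only [hc] at this
        omega)
      simp only [ha, hb]
      congr 1
      omega
    · subst heq
      have hKn1 : K n + 2 ^ (jl n) = K (n+1) := by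
        have := hKsucc n; simp only [hc] at this; omega
      rw [hKn1]
      have hb : blk (K (n+1)) = n+1 := hblk_eq (n+1) _ le_rfl (by
        have := hKsucc (n+1)
        have := hcpos (n+1)
        omega)
      simp only [ha, hb]
      rw [Nat.sub_self, dygrid_zero, dygrid_last]
      push_cast
      ring
  have hoff_lt : ∀ i, i - K (blk i) < 2 ^ (jl (blk i)) := by
    intro i
    have h1 := hblk_le i
    have h2 := hblk_lt i
    have h3 := hKsucc (blk i)
    simp only [hc] at h3
    omega
  have hamono : StrictMono a := by
    apply strictMono_nat_of_lt_succ
    intro i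
    have h1 := hblk_le i
    have h2 := hblk_lt i
    have hoff := hoff_lt i
    have e1 : a i = dygrid (blk i : ℝ) ((blk i : ℝ)+1) (jl (blk i)) (i - K (blk i)) := rfl
    have e2 : a (i+1) = dygrid (blk i : ℝ) ((blk i : ℝ)+1) (jl (blk i)) ((i - K (blk i)) + 1) := by
      have hidx : i + 1 = K (blk i) + ((i - K (blk i)) + 1) := by omega
      rw [hidx, hablock (blk i) _ (by omega)]
    rw [e1, e2]
    exact dygrid_lt (by linarith [lt_add_one (blk i : ℝ)]) _ (Nat.lt_succ_self _)
  have hapos : ∀ i, 0 ≤ a i := by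
    intro i
    have := (dygrid_mem (show (blk i:ℝ) ≤ (blk i:ℝ)+1 by linarith) (jl (blk i))
      (le_of_lt (hoff_lt i))).1
    have h0 : (0:ℝ) ≤ (blk i : ℝ) := Nat.cast_nonneg _
    calc (0:ℝ) ≤ (blk i : ℝ) := h0
      _ ≤ a i := this
  have hatend : Tendsto a atTop atTop := by
    rw [tendsto_atTop_atTop]
    intro b
    obtain ⟨nb, hnb⟩ := exists_nat_ge b
    refine ⟨K nb, fun i hi => ?_⟩
    have hblkge : nb ≤ blk i := Nat.le_findGreatest (P := fun n => K n ≤ i) (le_trans (hKge nb) hi) hi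
    have h1 : (blk i : ℝ) ≤ a i := (dygrid_mem (show (blk i:ℝ) ≤ (blk i:ℝ)+1 by linarith)
      (jl (blk i)) (le_of_lt (hoff_lt i))).1
    have h2 : (nb:ℝ) ≤ (blk i : ℝ) := by exact_mod_cast hblkge
    linarith
  refine ⟨a, hamono, hapos, hatend, ?_⟩
  intro k
  apply le_antisymm ?_ zero_le
  have hbound : ∀ N : ℕ, k ≤ N →
      P {ω | ∀ j : ℕ, k ≤ j → M (a (j+1)) ω ≤ M (a j) ω} ≤ (2⁻¹:ℝ≥0∞)^N * 2 := by
    intro N hkN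
    have hsub : {ω | ∀ j : ℕ, k ≤ j → M (a (j+1)) ω ≤ M (a j) ω} ⊆
        (⋂ (m : ℕ) (j' : ℕ), D (N+m) j') ∪
          (⋃ m : ℕ, (D (N+m) (jl (N+m)) \ ⋂ j', D (N+m) j')) := by
      intro ω hω
      rw [Set.mem_setOf_eq] at hω
      have hDm : ∀ n, N ≤ n → ω ∈ D n (jl n) := by
        intro n hn
        rw [hDmem]
        intro i hi
        have hKn := hKge n
        have hidx : k ≤ K n + i := by omega
        have hstep := hω (K n + i) hidx
        rwa [show K n + i + 1 = K n + (i+1) from by omega,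
          hablock n (i+1) (Nat.succ_le_of_lt hi), hablock n i hi.le] at hstep
      by_cases hall : ω ∈ ⋂ (m : ℕ) (j' : ℕ), D (N+m) j'
      · exact Or.inl hall
      · right
        simp only [Set.mem_iInter, not_forall] at hall
        obtain ⟨m, j', hmj⟩ := hall
        refine Set.mem_iUnion.mpr ⟨m, hDm (N+m) (Nat.le_add_right N m), ?_⟩
        simp only [Set.mem_iInter, not_forall]
        exact ⟨j', hmj⟩
    have hfirst : P (⋂ (m : ℕ) (j' : ℕ), D (N+m) j') = 0 := by
      apply measure_mono_null ?_ (measure_union_null (hMnull N) (ae_iff.mp hcont))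
      intro ω hω
      by_cases hcw : Continuous fun v => M v ω
      · left
        rw [Set.mem_setOf_eq]
        have hmono_int : ∀ n : ℕ, N ≤ n → ∀ x y : ℝ,
            (n:ℝ) ≤ x → x ≤ y → y ≤ (n:ℝ)+1 → M y ω ≤ M x ω := by
          intro n hn
          apply cont_dyadic_mono hcw (show (n:ℝ) < (n:ℝ)+1 by linarith)
          intro mm i hi
          have hrwn : N + (n - N) = n := by omega
          have hmem := Set.mem_iInter.mp (Set.mem_iInter.mp hω (n - N)) mm
          rw [hrwn] at hmem
          exact (hDmem n mm ω).mp hmem i hi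
        have hglobal := chain_mono hmono_int
        intro p q hp hpq
        exact hglobal p q hp hpq
      · right
        exact hcw
    have hsecond : P (⋃ m : ℕ, (D (N+m) (jl (N+m)) \ ⋂ j', D (N+m) j'))
        ≤ (2⁻¹:ℝ≥0∞)^N * 2 := by
      refine le_trans (measure_iUnion_le _) ?_
      have hterm : ∀ m : ℕ, P (D (N+m) (jl (N+m)) \ ⋂ j', D (N+m) j')
          ≤ (2⁻¹:ℝ≥0∞)^N * (2⁻¹:ℝ≥0∞)^m := by
        intro m
        refine le_trans (hjl (N+m)).le ?_
        rw [← pow_add]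
      refine le_trans (ENNReal.tsum_le_tsum hterm) ?_
      rw [ENNReal.tsum_mul_left, ENNReal.tsum_geometric]
      have h2 : ((1:ℝ≥0∞) - 2⁻¹)⁻¹ = 2 := by
        rw [ENNReal.one_sub_inv_two, inv_inv]
      rw [h2]
    calc P {ω | ∀ j : ℕ, k ≤ j → M (a (j+1)) ω ≤ M (a j) ω}
        ≤ P ((⋂ (m : ℕ) (j' : ℕ), D (N+m) j') ∪
          (⋃ m : ℕ, (D (N+m) (jl (N+m)) \ ⋂ j', D (N+m) j'))) := measure_mono hsub
      _ ≤ P (⋂ (m : ℕ) (j' : ℕ), D (N+m) j') +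
          P (⋃ m : ℕ, (D (N+m) (jl (N+m)) \ ⋂ j', D (N+m) j')) := measure_union_le _ _
      _ ≤ 0 + (2⁻¹:ℝ≥0∞)^N * 2 := by
          rw [hfirst]
          exact add_le_add le_rfl hsecond
      _ = (2⁻¹:ℝ≥0∞)^N * 2 := by rw [zero_add]
  have htendN : Tendsto (fun N : ℕ => (2⁻¹:ℝ≥0∞)^N * 2) atTop (nhds 0) := by
    have h1 : Tendsto (fun N : ℕ => (2⁻¹:ℝ≥0∞)^N) atTop (nhds 0) :=
      ENNReal.tendsto_pow_atTop_nhds_zero_of_lt_one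
        (ENNReal.inv_lt_one.mpr ENNReal.one_lt_two)
    have h2 := ENNReal.Tendsto.mul_const h1 (Or.inr (ENNReal.ofNat_ne_top (n := 2)))
    simpa using h2
  exact ge_of_tendsto htendN (by
    filter_upwards [eventually_ge_atTop k] with N hN using hbound N hN)
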